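/- Let q be a prime power and K a finite field with q elements. Then the number of quintuples (a₁, a₂, a₃, a₄, a₆) ∈ K⁵ for which the Weierstrass curve y² + a₁xy + a₃y = x³ + a₂x² + a₄x + a₆ has nonzero discriminant equals q⁵ − q⁴ = (q − 1)·q³·q. Equivalently, the number of quintuples with zero discriminant is q⁴. (This expresses that the weighted number Σ_{[E]} 1/#Aut_K(E) of K-isomorphism classes of elliptic curves over K equals q, since each isomorphism class [E] corresponds to exactly #A(K)/#Aut_K(E) Weierstrass models, where the group A(K) of substitutions x ↦ u²x + r, y ↦ u³y + su²x + t with u ∈ K^*, r, s, t ∈ K has cardinality (q − 1)·q³.) -/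

import Mathlib

lemma Δ_mk {K : Type*} [CommRing K] (a1 a2 a3 a4 a6 : K) :
    (WeierstrassCurve.mk a1 a2 a3 a4 a6).Δ =
      -(a1^2+4*a2)^2*(a1^2*a6 + 4*a2*a6 - a1*a3*a4 + a2*a3^2 - a4^2)
        - 8*(2*a4+a1*a3)^3 - 27*(a3^2+4*a6)^2
        + 9*(a1^2+4*a2)*(2*a4+a1*a3)*(a3^2+4*a6) := by
  simp only [WeierstrassCurve.Δ, WeierstrassCurve.b₂, WeierstrassCurve.b₄,
    WeierstrassCurve.b₆, WeierstrassCurve.b₈]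

open Classical in
lemma card_solve (K : Type*) [Field K] [Fintype K] (a b : K) :
    Nat.card {x : K // a * x = b}
      = if a = 0 then (if b = 0 then Fintype.card K else 0) else 1 := by
  split_ifs with h1 h2
  · subst h1; subst h2
    rw [Nat.card_congr (Equiv.subtypeUnivEquiv (by simp)), Nat.card_eq_fintype_card]
  · have : IsEmpty {x : K // a * x = b} :=
      ⟨fun ⟨x, hx⟩ => h2 (by rw [h1, zero_mul] at hx; exact hx.symm)⟩
    simp [Nat.card_of_isEmpty]
  · have : Unique {x : K // a * x = b} :=
    { default := ⟨a⁻¹ * b, by field_simp⟩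
      uniq := fun ⟨x, hx⟩ => Subtype.ext (by field_simp; linear_combination hx) }
    exact Nat.card_unique

def e4 {K : Type*} (P : K × K × K × K × K → Prop) :
    {c : K × K × K × K × K // P c}
      ≃ Σ w : K × K × K × K, {x : K // P (w.1, w.2.1, w.2.2.1, w.2.2.2, x)} where
  toFun c := ⟨(c.1.1, c.1.2.1, c.1.2.2.1, c.1.2.2.2.1), c.1.2.2.2.2, c.2⟩
  invFun s := ⟨(s.1.1, s.1.2.1, s.1.2.2.1, s.1.2.2.2, s.2.1), s.2.2⟩
  left_inv _ := rfl
  right_inv _ := rfl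

def e2 {K : Type*} (P : K × K → Prop) :
    {c : K × K × K × K × K // P c.2.2.2}
      ≃ (K × K × K) × {v : K × K // P v} where
  toFun c := ((c.1.1, c.1.2.1, c.1.2.2.1), ⟨c.1.2.2.2, c.2⟩)
  invFun p := ⟨(p.1.1, p.1.2.1, p.1.2.2, p.2.1.1, p.2.1.2), p.2.2⟩
  left_inv _ := rfl
  right_inv _ := rfl

lemma sum_ite_card {K : Type*} [Fintype K] [DecidableEq K] (c : K) (n : ℕ) :
    (∑ x : K, if x = c then n else 0) = n := by
  simp [Finset.sum_ite_eq']

lemma card_cusp (K : Type*) [Field K] [Fintype K] (h2 : (2:K) ≠ 0) (h3 : (3:K) ≠ 0) :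
    Nat.card {v : K × K // 4 * v.1 ^ 3 + 27 * v.2 ^ 2 = 0} = Fintype.card K := by
  have h27 : (27:K) ≠ 0 := by
    have := pow_ne_zero 3 h3; rwa [show (3:K)^3 = 27 by norm_num] at this
  have h4 : (4:K) ≠ 0 := by
    have := pow_ne_zero 2 h2; rwa [show (2:K)^2 = 4 by norm_num] at this
  rw [← Nat.card_eq_fintype_card]
  refine (Nat.card_congr (Equiv.ofBijective
    (fun u : K => (⟨(-3 * u ^ 2, 2 * u ^ 3), by ring⟩ :
      {v : K × K // 4 * v.1 ^ 3 + 27 * v.2 ^ 2 = 0})) ⟨?_, ?_⟩)).symm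
  · intro u v h
    simp only [Subtype.ext_iff, Prod.ext_iff] at h
    obtain ⟨hu, hv⟩ := h
    have h1 : u ^ 2 = v ^ 2 := by
      apply mul_left_cancel₀ (show (-3:K) ≠ 0 by simpa using h3)
      linear_combination hu
    have h2' : u ^ 3 = v ^ 3 := mul_left_cancel₀ h2 hv
    rcases eq_or_ne u 0 with rfl | hu0
    · have hv2 : v ^ 2 = 0 := by linear_combination -h1
      exact ((pow_eq_zero_iff (two_ne_zero)).mp hv2).symm
    · have : u * u ^ 2 = v * u ^ 2 := by linear_combination h2' - v * h1
      exact mul_right_cancel₀ (pow_ne_zero 2 hu0) this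
  · rintro ⟨⟨A, B⟩, h⟩
    rcases eq_or_ne A 0 with rfl | hA
    · have hB : B = 0 := by
        have hB2 : B ^ 2 = 0 := by
          apply mul_left_cancel₀ h27
          linear_combination h
        exact (pow_eq_zero_iff (two_ne_zero)).mp hB2
      exact ⟨0, by ext <;> simp [hB]⟩
    · refine ⟨-(3 * B) / (2 * A), ?_⟩
      have h2A : (2 * A) ≠ 0 := mul_ne_zero h2 hA
      ext
      · show -3 * (-(3 * B) / (2 * A)) ^ 2 = A
        rw [div_pow, ← mul_div_assoc]
        rw [div_eq_iff (pow_ne_zero 2 h2A)]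
        linear_combination -h
      · show 2 * (-(3 * B) / (2 * A)) ^ 3 = B
        rw [div_pow, ← mul_div_assoc]
        rw [div_eq_iff (pow_ne_zero 3 h2A)]
        linear_combination (-2 * B) * h

lemma card_char2 (K : Type*) [Field K] [Fintype K] (q : ℕ) (hq : Fintype.card K = q)
    (h2 : (2:K) = 0) :
    Nat.card {c : K × K × K × K × K //
        (WeierstrassCurve.mk c.1 c.2.1 c.2.2.1 c.2.2.2.1 c.2.2.2.2).Δ = 0} = q ^ 4 := by
  classical
  have key : ∀ a1 a2 a3 a4 x : K, ((WeierstrassCurve.mk a1 a2 a3 a4 x).Δ = 0)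
      ↔ a1^6 * x = a3^4 + a1^3*a3^3 + a1^4*a4^2 + a1^4*a2*a3^2 + a1^5*a3*a4 := by
    intro a1 a2 a3 a4 x
    have hΔ : (WeierstrassCurve.mk a1 a2 a3 a4 x).Δ
        = a1^6 * x - (a3^4 + a1^3*a3^3 + a1^4*a4^2 + a1^4*a2*a3^2 + a1^5*a3*a4) := by
      rw [Δ_mk]
      linear_combination ((-216)*x^2 + (-32)*a4^3 + (-108)*a3^2*x + (-13)*a3^4 + 144*a2*a4*x + 36*a2*a3^2*a4 + 8*a2^2*a4^2 + (-32)*a2^3*x + (-8)*a2^3*a3^2 + (-48)*a1*a3*a4^2 + 72*a1*a2*a3*x + 18*a1*a2*a3^3 + 8*a1*a2^2*a3*a4 + 36*a1^2*a4*x + (-15)*a1^2*a3^2*a4 + 4*a1^2*a2*a4^2 + (-24)*a1^2*a2^2*x + (-4)*a1^2*a2^2*a3^2 + 18*a1^3*a3*x + a1^3*a3^3 + 4*a1^3*a2*a3*a4 + a1^4*a4^2 + (-6)*a1^4*a2*x + a1^5*a3*a4 + (-1)*a1^6*x) * h2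
    rw [hΔ, sub_eq_zero]
  have hfib : ∀ a1 a2 a3 a4 : K,
      Fintype.card {x : K // (WeierstrassCurve.mk a1 a2 a3 a4 x).Δ = 0}
        = if a1 = 0 then (if a3 = 0 then q else 0) else 1 := by
    intro a1 a2 a3 a4
    rw [← Nat.card_eq_fintype_card,
      Nat.card_congr (Equiv.subtypeEquivRight (key a1 a2 a3 a4)), card_solve, hq]
    by_cases h : a1 = 0
    · simp [h, pow_eq_zero_iff]
    · simp [h, pow_eq_zero_iff]
  rw [Nat.card_congr (e4 _), Nat.card_eq_fintype_card, Fintype.card_sigma]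
  simp only [Fintype.sum_prod_type]
  simp only [hfib]
  have inner : ∀ a1 : K,
      (∑ a2 : K, ∑ a3 : K, ∑ a4 : K,
        (if a1 = 0 then (if a3 = 0 then q else 0) else 1)) = q^3 := by
    intro a1
    by_cases h : a1 = 0
    · simp [h, Finset.sum_const, Finset.card_univ, hq, Finset.sum_ite_eq', mul_ite]
      ring
    · simp [h, Finset.sum_const, Finset.card_univ, hq]
      ring
  simp only [inner]
  simp [Finset.sum_const, Finset.card_univ, hq]
  ring

lemma card_char3 (K : Type*) [Field K] [Fintype K] (q : ℕ) (hq : Fintype.card K = q)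
    (h3 : (3:K) = 0) :
    Nat.card {c : K × K × K × K × K //
        (WeierstrassCurve.mk c.1 c.2.1 c.2.2.1 c.2.2.2.1 c.2.2.2.2).Δ = 0} = q ^ 4 := by
  classical
  have key : ∀ a1 a2 a3 a4 x : K, ((WeierstrassCurve.mk a1 a2 a3 a4 x).Δ = 0)
      ↔ (a1^2+a2)^3 * x
          = (a1*a3-a4)^3 - (a1^2+a2)^2*(-(a1*a3*a4) + a2*a3^2 - a4^2) := by
    intro a1 a2 a3 a4 x
    have hΔ : (WeierstrassCurve.mk a1 a2 a3 a4 x).Δ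
        = -((a1^2+a2)^3 * x
            - ((a1*a3-a4)^3 - (a1^2+a2)^2*(-(a1*a3*a4) + a2*a3^2 - a4^2))) := by
      rw [Δ_mk]
      linear_combination ((-144)*x^2 + (-21)*a4^3 + (-72)*a3^2*x + (-9)*a3^4 + 96*a2*a4*x + 24*a2*a3^2*a4 + 5*a2^2*a4^2 + (-21)*a2^3*x + (-5)*a2^3*a3^2 + (-33)*a1*a3*a4^2 + 48*a1*a2*a3*x + 12*a1*a2*a3^3 + 5*a1*a2^2*a3*a4 + 24*a1^2*a4*x + (-9)*a1^2*a3^2*a4 + 2*a1^2*a2*a4^2 + (-15)*a1^2*a2^2*x + (-2)*a1^2*a2^2*a3^2 + 12*a1^3*a3*x + 2*a1^3*a2*a3*a4 + (-3)*a1^4*a2*x) * h3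
    rw [hΔ, neg_eq_zero, sub_eq_zero]
  have hfib : ∀ a1 a2 a3 a4 : K,
      Fintype.card {x : K // (WeierstrassCurve.mk a1 a2 a3 a4 x).Δ = 0}
        = if a1^2 + a2 = 0 then (if a4 = a1*a3 then q else 0) else 1 := by
    intro a1 a2 a3 a4
    rw [← Nat.card_eq_fintype_card,
      Nat.card_congr (Equiv.subtypeEquivRight (key a1 a2 a3 a4)), card_solve, hq]
    by_cases h : a1^2 + a2 = 0
    · have hiff : ((a1*a3-a4)^3 - (a1^2+a2)^2*(-(a1*a3*a4) + a2*a3^2 - a4^2) = 0)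
          ↔ a4 = a1*a3 := by
        rw [h]
        simp [pow_eq_zero_iff, sub_eq_zero]
        exact eq_comm
      simp [h, hiff, pow_eq_zero_iff]
      simp [sub_eq_zero, eq_comm]
    · simp [h, pow_eq_zero_iff]
  rw [Nat.card_congr (e4 _), Nat.card_eq_fintype_card, Fintype.card_sigma]
  simp only [Fintype.sum_prod_type]
  simp only [hfib]
  have inner : ∀ a1 a2 : K,
      (∑ a3 : K, ∑ a4 : K,
        (if a1^2 + a2 = 0 then (if a4 = a1*a3 then q else 0) else 1)) = q^2 := by
    intro a1 a2
    by_cases h : a1^2 + a2 = 0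
    · simp [h, Finset.sum_ite_eq', Finset.sum_const, Finset.card_univ, hq]
      ring
    · simp [h, Finset.sum_const, Finset.card_univ, hq]
      ring
  simp only [inner]
  simp [Finset.sum_const, Finset.card_univ, hq]
  ring

lemma card_big (K : Type*) [Field K] [Fintype K] (q : ℕ) (hq : Fintype.card K = q)
    (h2 : (2:K) ≠ 0) (h3 : (3:K) ≠ 0) :
    Nat.card {c : K × K × K × K × K //
        (WeierstrassCurve.mk c.1 c.2.1 c.2.2.1 c.2.2.2.1 c.2.2.2.2).Δ = 0} = q ^ 4 := by
  set Φ : K × K × K × K × K → K × K × K × K × K := fun x =>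
    (2*x.1, 3*x.2.1 - x.1^2, 2*x.2.2.1, x.2.2.2.1 + 3*x.2.1^2 - 2*x.1*x.2.2.1,
      x.2.2.2.2 + x.2.1*x.2.2.2.1 + x.2.1^3 - x.2.2.1^2) with hΦ
  have hbij : Function.Bijective Φ := by
    constructor
    · rintro ⟨s,r,t,A,B⟩ ⟨s',r',t',A',B'⟩ h
      simp only [hΦ, Prod.ext_iff] at h ⊢
      obtain ⟨e1,e2,e3,e4,e5⟩ := h
      have hs : s = s' := mul_left_cancel₀ h2 e1
      subst hs
      have hr : r = r' := by
        apply mul_left_cancel₀ h3; linear_combination e2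
      subst hr
      have ht : t = t' := mul_left_cancel₀ h2 e3
      subst ht
      have hA : A = A' := by linear_combination e4
      subst hA
      have hB : B = B' := by linear_combination e5
      exact ⟨rfl, rfl, rfl, rfl, hB⟩
    · rintro ⟨a1,a2,a3,a4,a6⟩
      obtain ⟨s, hs⟩ : ∃ s, a1 = 2*s := ⟨a1/2, by field_simp⟩
      obtain ⟨r, hr⟩ : ∃ r, a2 = 3*r - s^2 := ⟨(a2+s^2)/3, by field_simp; ring⟩
      obtain ⟨t, ht⟩ : ∃ t, a3 = 2*t := ⟨a3/2, by field_simp⟩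
      refine ⟨(s, r, t, a4 - 3*r^2 + 2*s*t, a6 - r*(a4 - 3*r^2 + 2*s*t) - r^3 + t^2), ?_⟩
      simp only [hΦ, Prod.ext_iff]
      exact ⟨hs.symm, hr.symm, ht.symm, by ring, by ring⟩
  have key : ∀ x : K × K × K × K × K,
      (WeierstrassCurve.mk (Φ x).1 (Φ x).2.1 (Φ x).2.2.1 (Φ x).2.2.2.1 (Φ x).2.2.2.2).Δ
        = -16 * (4 * x.2.2.2.1 ^ 3 + 27 * x.2.2.2.2 ^ 2) := by
    rintro ⟨s,r,t,A,B⟩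
    simp only [hΦ]
    rw [Δ_mk]
    ring
  have h16 : (-16 : K) ≠ 0 := by
    have := pow_ne_zero 4 h2
    rw [show (2:K)^4 = 16 by norm_num] at this
    simpa using this
  calc Nat.card {c : K × K × K × K × K //
        (WeierstrassCurve.mk c.1 c.2.1 c.2.2.1 c.2.2.2.1 c.2.2.2.2).Δ = 0}
      = Nat.card {x : K × K × K × K × K //
          4 * x.2.2.2.1 ^ 3 + 27 * x.2.2.2.2 ^ 2 = 0} := by
        refine Nat.card_congr (((Equiv.ofBijective Φ hbij).subtypeEquiv fun x => ?_).symm)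
        rw [Equiv.ofBijective_apply, key x]
        constructor
        · intro h; rw [h, mul_zero]
        · intro h
          rcases mul_eq_zero.mp h with h' | h'
          · exact absurd h' h16
          · exact h'
    _ = Nat.card ((K × K × K) × {v : K × K // 4 * v.1 ^ 3 + 27 * v.2 ^ 2 = 0}) :=
        Nat.card_congr (e2 (fun v : K × K => 4 * v.1 ^ 3 + 27 * v.2 ^ 2 = 0))
    _ = q ^ 4 := by
        rw [Nat.card_prod, card_cusp K h2 h3]
        simp only [Nat.card_prod, Nat.card_eq_fintype_card, Fintype.card_prod, hq]
        ring


/-- **Lenstra.** Over a finite field `K` with `q` elements, the number of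
quintuples `(a₁,a₂,a₃,a₄,a₆) ∈ K⁵` whose Weierstrass curve has nonzero discriminant is
`q⁵ − q⁴ = (q − 1)·q³·q`; equivalently the number with zero discriminant is `q⁴`. -/
theorem count_weierstrass_models
    (K : Type*) [Field K] [Fintype K] (q : ℕ) (hq : Fintype.card K = q) :
    Nat.card {c : K × K × K × K × K //
        (WeierstrassCurve.mk c.1 c.2.1 c.2.2.1 c.2.2.2.1 c.2.2.2.2).Δ ≠ 0}
      = q ^ 5 - q ^ 4
    ∧ q ^ 5 - q ^ 4 = (q - 1) * q ^ 3 * q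
    ∧ Nat.card {c : K × K × K × K × K //
        (WeierstrassCurve.mk c.1 c.2.1 c.2.2.1 c.2.2.2.1 c.2.2.2.2).Δ = 0}
      = q ^ 4 := by
  classical
  have key : Nat.card {c : K × K × K × K × K //
      (WeierstrassCurve.mk c.1 c.2.1 c.2.2.1 c.2.2.2.1 c.2.2.2.2).Δ = 0} = q ^ 4 := by
    by_cases h2 : (2:K) = 0
    · exact card_char2 K q hq h2
    · by_cases h3 : (3:K) = 0
      · exact card_char3 K q hq h3
      · exact card_big K q hq h2 h3
  have hq5 : Fintype.card (K × K × K × K × K) = q ^ 5 := by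
    simp only [Fintype.card_prod, hq]; ring
  refine ⟨?_, ?_, key⟩
  · calc Nat.card {c : K × K × K × K × K //
        (WeierstrassCurve.mk c.1 c.2.1 c.2.2.1 c.2.2.2.1 c.2.2.2.2).Δ ≠ 0}
        = Fintype.card {c : K × K × K × K × K //
            ¬ ((WeierstrassCurve.mk c.1 c.2.1 c.2.2.1 c.2.2.2.1 c.2.2.2.2).Δ = 0)} :=
          Nat.card_eq_fintype_card
      _ = Fintype.card (K × K × K × K × K) - Fintype.card {c : K × K × K × K × K //
            (WeierstrassCurve.mk c.1 c.2.1 c.2.2.1 c.2.2.2.1 c.2.2.2.2).Δ = 0} :=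
          Fintype.card_subtype_compl _
      _ = q ^ 5 - q ^ 4 := by rw [hq5, ← Nat.card_eq_fintype_card, key]
  · have h1 : (q - 1) * q ^ 3 * q = (q - 1) * q ^ 4 := by ring
    have h2 : q * q ^ 4 = q ^ 5 := by ring
    rw [h1, Nat.sub_mul, one_mul, h2]
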